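/- Let f : [0,∞) → ℝ be continuous with f(0) ≥ 0. Define L(t) = sup_{0 ≤ s ≤ t} max(-f(s), 0). Then L is nondecreasing, continuous, L(0) = 0, and ξ(t) := f(t) + L(t) ≥ 0 for all t. -/

import Mathlib

open Set

private lemma runSup_bdd (g : ℝ → ℝ) (hg : ContinuousOn g (Set.Ici 0)) {t : ℝ} :
    BddAbove (g '' Set.Icc 0 t) :=
  (isCompact_Icc.image_of_continuousOn (hg.mono Icc_subset_Ici_self)).bddAbove

private lemma runSup_mono (g : ℝ → ℝ) (hg : ContinuousOn g (Set.Ici 0)) :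
    MonotoneOn (fun t => sSup (g '' Set.Icc 0 t)) (Set.Ici 0) := by
  intro a ha b _ hab
  exact csSup_le_csSup (runSup_bdd g hg)
    ⟨g 0, mem_image_of_mem g ⟨le_rfl, ha⟩⟩
    (image_mono (f := g) (Icc_subset_Icc le_rfl hab))

private lemma runSup_le_add (g : ℝ → ℝ) (hg : ContinuousOn g (Set.Ici 0))
    {a b ε δ : ℝ} (ha : 0 ≤ a) (hab : a ≤ b) (hε : 0 ≤ ε)
    (h : ∀ x ∈ Icc (0:ℝ) b, ∀ y ∈ Icc (0:ℝ) b, dist x y < δ → dist (g x) (g y) ≤ ε)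
    (hba : b - a < δ) :
    sSup (g '' Icc 0 b) ≤ sSup (g '' Icc 0 a) + ε := by
  have hbdd : BddAbove (g '' Icc 0 a) := runSup_bdd g hg
  apply csSup_le (⟨g 0, mem_image_of_mem g ⟨le_rfl, ha.trans hab⟩⟩ : (g '' Icc 0 b).Nonempty)
  rintro y ⟨s, hs, rfl⟩
  by_cases hsa : s ≤ a
  · have h1 : g s ≤ sSup (g '' Icc 0 a) := le_csSup hbdd ⟨s, ⟨hs.1, hsa⟩, rfl⟩
    linarith
  · push_neg at hsa
    have hd : dist s a < δ := by
      rw [Real.dist_eq, abs_of_pos (by linarith)]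
      linarith [hs.2]
    have h2 := h s hs a ⟨ha, hab⟩ hd
    rw [Real.dist_eq] at h2
    have h3 : g s ≤ g a + ε := by
      cases abs_le.mp h2 with
      | intro l r => linarith
    have h4 : g a ≤ sSup (g '' Icc 0 a) := le_csSup hbdd ⟨a, ⟨ha, le_rfl⟩, rfl⟩
    linarith

private lemma runSup_cont (g : ℝ → ℝ) (hg : ContinuousOn g (Set.Ici 0)) :
    ContinuousOn (fun t => sSup (g '' Set.Icc 0 t)) (Set.Ici 0) := by
  intro t₀ ht₀
  rw [Metric.continuousWithinAt_iff]
  intro ε hε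
  have hK : IsCompact (Icc (0:ℝ) (t₀ + 1)) := isCompact_Icc
  have huc : UniformContinuousOn g (Icc 0 (t₀ + 1)) :=
    hK.uniformContinuousOn_of_continuous (hg.mono (Icc_subset_Ici_self))
  obtain ⟨δ, hδ, hδε⟩ := (Metric.uniformContinuousOn_iff.mp huc) (ε / 2) (by linarith)
  refine ⟨min δ 1, by positivity, fun t ht hdist => ?_⟩
  have ht1 : t ≤ t₀ + 1 := by
    have := (abs_lt.mp (by simpa [Real.dist_eq] using hdist.trans_le (min_le_right δ 1))).2
    linarith
  have hdistδ : dist t t₀ < δ := hdist.trans_le (min_le_left δ 1)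
  have key : ∀ a b : ℝ, 0 ≤ a → a ≤ b → b ≤ t₀ + 1 → b - a < δ →
      sSup (g '' Icc 0 b) ≤ sSup (g '' Icc 0 a) + ε / 2 := by
    intro a b ha hab hb hba
    refine runSup_le_add g hg ha hab (by linarith) (fun x hx y hy hxy => ?_) hba
    exact le_of_lt (hδε x (Icc_subset_Icc le_rfl hb hx) y (Icc_subset_Icc le_rfl hb hy) hxy)
  rcases le_total t t₀ with hle | hle
  · have h1 : sSup (g '' Icc 0 t) ≤ sSup (g '' Icc 0 t₀) :=
      runSup_mono g hg ht ht₀ hle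
    have h2 : sSup (g '' Icc 0 t₀) ≤ sSup (g '' Icc 0 t) + ε / 2 := by
      refine key t t₀ ht hle (by linarith) ?_
      rw [Real.dist_eq, abs_sub_comm] at hdistδ
      calc t₀ - t ≤ |t₀ - t| := le_abs_self _
        _ < δ := hdistδ
    rw [Real.dist_eq]
    rw [abs_lt]
    constructor <;> linarith
  · have h1 : sSup (g '' Icc 0 t₀) ≤ sSup (g '' Icc 0 t) :=
      runSup_mono g hg ht₀ ht hle
    have h2 : sSup (g '' Icc 0 t) ≤ sSup (g '' Icc 0 t₀) + ε / 2 := by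
      refine key t₀ t ht₀ hle ht1 ?_
      rw [Real.dist_eq] at hdistδ
      calc t - t₀ ≤ |t - t₀| := le_abs_self _
        _ < δ := hdistδ
    rw [Real.dist_eq, abs_lt]
    constructor <;> linarith

/-- One-dimensional Skorohod reflection on `[0,∞)`: with
`L t = sup_{0 ≤ s ≤ t} (-f s)⁺`, the regulator `L` is nondecreasing, continuous,
vanishes at `0`, and `ξ = f + L` is nonnegative. -/
theorem skorohod_regulator_properties
    (f : ℝ → ℝ) (hf : ContinuousOn f (Set.Ici 0)) (hf0 : 0 ≤ f 0)
    (L : ℝ → ℝ)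
    (hL : ∀ t, L t = sSup ((fun s => max (-f s) 0) '' Set.Icc 0 t)) :
    MonotoneOn L (Set.Ici 0) ∧ ContinuousOn L (Set.Ici 0) ∧ L 0 = 0 ∧
      ∀ t, 0 ≤ t → 0 ≤ f t + L t := by
  set g : ℝ → ℝ := fun s => max (-f s) 0 with hg_def
  have hg : ContinuousOn g (Set.Ici 0) := fun x hx => ((hf x hx).neg).max continuousWithinAt_const
  have hLfun : L = fun t => sSup (g '' Set.Icc 0 t) := funext hL
  refine ⟨?_, ?_, ?_, ?_⟩
  · rw [hLfun]; exact runSup_mono g hg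
  · rw [hLfun]; exact runSup_cont g hg
  · rw [hL 0, Set.Icc_self, Set.image_singleton, csSup_singleton]
    simp [hg_def, max_eq_right (neg_nonpos_of_nonneg hf0)]
  · intro t ht
    have h1 : g t ≤ L t := by
      rw [hL t]
      exact le_csSup (runSup_bdd g hg) ⟨t, ⟨ht, le_rfl⟩, rfl⟩
    have h2 : -f t ≤ g t := le_max_left _ _
    linarith
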